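/- Let q(z) = (1/|a|²) Σ' (f_{i,j,m}(z)²/(d_{i,j} d_{j,m} d_{m,i})) v_{i,j}, where m ∈ {1,…,n} is fixed and Σ' is over pairs i < j with m ∉ {i,j}. Then for every z ∈ ℂ^n with f_{i,j,k}(z) ≠ 0 for all triples of distinct indices, and for every ℓ ∈ {1,…,n}: (|a|/2) ∂q/∂z_ℓ (z) = K_ℓ(z) q(z). Thus q is a flat section of the Gauss–Manin connection at parameter κ = |a|/2, spanning a one-dimensional invariant subbundle (the bundle of conformal blocks at level |a|/2). -/

import Mathlib

open Finset

/-- `d_{i,j} = b_i^1 b_j^2 − b_i^2 b_j^1`. -/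
def dd2 {n : ℕ} (b : Fin n → Fin 2 → ℂ) (i j : Fin n) : ℂ :=
  b i 0 * b j 1 - b i 1 * b j 0

/-- `f_{i,j,k}(z) = d_{j,k} z_i + d_{k,i} z_j + d_{i,j} z_k`. -/
def ff2 {n : ℕ} (b : Fin n → Fin 2 → ℂ) (z : Fin n → ℂ) (i j k : Fin n) : ℂ :=
  dd2 b j k * z i + dd2 b k i * z j + dd2 b i j * z k

/-- The basis vector `F_{i,j}` of `V` in the coordinate model: an element of
`Fin n → Fin n → ℂ` whose `(i,j)` entry is `1` and `(j,i)` entry is `-1`.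
This realizes the relations `F_{j,i} = -F_{i,j}` and `F_{i,i} = 0`. -/
def F2 (n : ℕ) (i j : Fin n) : Fin n → Fin n → ℂ :=
  fun k l => (if k = i ∧ l = j then 1 else 0) - (if k = j ∧ l = i then 1 else 0)

/-- The space `V` spanned by the `F_{i,j}`: antisymmetric coefficient arrays. -/
noncomputable def skewV2 (n : ℕ) : Submodule ℂ (Fin n → Fin n → ℂ) where
  carrier := {x | ∀ i j, x j i = -x i j}
  add_mem' := by
    intro x y hx hy i j
    simp only [Pi.add_apply, hx i j, hy i j]
    ring
  zero_mem' := by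
    intro i j
    simp
  smul_mem' := by
    intro c x hx i j
    simp only [Pi.smul_apply, smul_eq_mul, hx i j]
    ring

/-- The subspace `Sing V ⊆ V` of singular vectors:
`{∑_{i<j} c_{i,j} F_{i,j} : ∑_{j<i} a_j c_{j,i} − ∑_{j>i} a_j c_{i,j} = 0 for every i}`. -/
noncomputable def singV2 (n : ℕ) (a : Fin n → ℂ) : Submodule ℂ (Fin n → Fin n → ℂ) where
  carrier := {x | (∀ i j, x j i = -x i j) ∧ ∀ i,
    (∑ j ∈ Finset.univ.filter (fun j => j < i), a j * x j i) -
      (∑ j ∈ Finset.univ.filter (fun j => i < j), a j * x i j) = 0}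
  add_mem' := by
    intro x y hx hy
    refine ⟨fun i j => ?_, fun i => ?_⟩
    · simp only [Pi.add_apply, hx.1 i j, hy.1 i j]; ring
    · have h1 := hx.2 i
      have h2 := hy.2 i
      simp only [Pi.add_apply, mul_add, Finset.sum_add_distrib]
      linear_combination h1 + h2
  zero_mem' := by
    constructor
    · intro i j; simp
    · intro i; simp
  smul_mem' := by
    intro c x hx
    refine ⟨fun i j => ?_, fun i => ?_⟩
    · simp only [Pi.smul_apply, smul_eq_mul, hx.1 i j]; ring
    · have h := hx.2 i
      simp only [Pi.smul_apply, smul_eq_mul]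
      have e1 : ∑ j ∈ Finset.univ.filter (fun j => j < i), a j * (c * x j i) =
          c * ∑ j ∈ Finset.univ.filter (fun j => j < i), a j * x j i := by
        rw [Finset.mul_sum]; exact Finset.sum_congr rfl fun j _ => by ring
      have e2 : ∑ j ∈ Finset.univ.filter (fun j => i < j), a j * (c * x i j) =
          c * ∑ j ∈ Finset.univ.filter (fun j => i < j), a j * x i j := by
        rw [Finset.mul_sum]; exact Finset.sum_congr rfl fun j _ => by ring
      rw [e1, e2]
      linear_combination c * h

/-- The vector `v_{i,j} = F_{i,j} − (a_j/|a|) ∑_k F_{i,k} − (a_i/|a|) ∑_ℓ F_{ℓ,j}`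
(for `i ≠ j`), and `v_{i,i} = 0`. -/
noncomputable def vv2 {n : ℕ} (a : Fin n → ℂ) (i j : Fin n) : Fin n → Fin n → ℂ :=
  if i = j then 0 else
    F2 n i j - (a j / ∑ m, a m) • (∑ k, F2 n i k) - (a i / ∑ m, a m) • (∑ l, F2 n l j)

/-- The contravariant form `S^{(a)}` with `S^{(a)}(F_{i,j}, F_{i,j}) = a_i a_j` for `i < j`
and distinct basis vectors orthogonal, written on coordinates. -/
noncomputable def S2 {n : ℕ} (a : Fin n → ℂ) (x y : Fin n → Fin n → ℂ) : ℂ :=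
  ∑ i, ∑ j ∈ Finset.univ.filter (fun j => i < j), a i * a j * x i j * y i j

/-- The operator `L_{i,j,k}` sending each of `F_{i,j}, F_{j,k}, F_{k,i}` to
`a_k F_{i,j} + a_i F_{j,k} + a_j F_{k,i}` and killing `F_{ℓ,m}` with `{ℓ,m} ⊄ {i,j,k}`. -/
noncomputable def L2 {n : ℕ} (a : Fin n → ℂ) (i j k : Fin n) :
    (Fin n → Fin n → ℂ) →ₗ[ℂ] (Fin n → Fin n → ℂ) where
  toFun x := (x i j + x j k + x k i) •
    (a k • F2 n i j + a i • F2 n j k + a j • F2 n k i)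
  map_add' x y := by
    simp only [Pi.add_apply]
    rw [← add_smul]
    congr 1
    ring
  map_smul' c x := by
    simp only [Pi.smul_apply, smul_eq_mul, RingHom.id_apply]
    rw [smul_smul]
    congr 1
    ring

/-- The operator `K_i(z) = ∑_{{j,k} ⊆ {1,…,n}∖{i}} (d_{j,k}/f_{i,j,k}(z)) L_{i,j,k}`,
the sum over unordered pairs `{j,k}` realized by `j < k`. -/
noncomputable def K2 {n : ℕ} (a : Fin n → ℂ) (b : Fin n → Fin 2 → ℂ) (z : Fin n → ℂ)
    (i : Fin n) : (Fin n → Fin n → ℂ) →ₗ[ℂ] (Fin n → Fin n → ℂ) :=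
  ∑ j ∈ Finset.univ.erase i, ∑ k ∈ Finset.univ.filter (fun k => j < k ∧ k ≠ i),
    (dd2 b j k / ff2 b z i j k) • L2 a i j k

/-- The period map
`q(z) = (1/|a|²) ∑'_{i<j, m∉{i,j}} (f_{i,j,m}(z)²/(d_{i,j} d_{j,m} d_{m,i})) v_{i,j}`. -/
noncomputable def qmap2 {n : ℕ} (a : Fin n → ℂ) (b : Fin n → Fin 2 → ℂ) (m : Fin n)
    (z : Fin n → ℂ) : Fin n → Fin n → ℂ :=
  ((∑ j, a j) ^ 2)⁻¹ • ∑ i, ∑ j ∈ Finset.univ.filter (fun j => i < j ∧ i ≠ m ∧ j ≠ m),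
    (ff2 b z i j m ^ 2 / (dd2 b i j * dd2 b j m * dd2 b m i)) • vv2 a i j


/-! ### Auxiliary lemmas -/

section AuxBasic
variable {n : ℕ}

lemma dd2_swap (b : Fin n → Fin 2 → ℂ) (i j : Fin n) : dd2 b j i = -dd2 b i j := by
  simp only [dd2]; ring

lemma dd2_diag (b : Fin n → Fin 2 → ℂ) (i : Fin n) : dd2 b i i = 0 := by
  simp only [dd2]; ring

lemma ff2_swap (b : Fin n → Fin 2 → ℂ) (z : Fin n → ℂ) (i j k : Fin n) :
    ff2 b z j i k = -ff2 b z i j k := by simp only [ff2, dd2]; ring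

lemma ff2_swap23 (b : Fin n → Fin 2 → ℂ) (z : Fin n → ℂ) (i j k : Fin n) :
    ff2 b z i k j = -ff2 b z i j k := by simp only [ff2, dd2]; ring

lemma ff2_cyc (b : Fin n → Fin 2 → ℂ) (z : Fin n → ℂ) (i j k : Fin n) :
    ff2 b z j k i = ff2 b z i j k := by simp only [ff2, dd2]; ring

lemma F2_swap (i j : Fin n) : F2 n i j = -F2 n j i := by
  funext p r; simp only [F2, Pi.neg_apply]; ring

lemma F2_diag (i : Fin n) : F2 n i i = 0 := by funext p r; simp [F2]

lemma F2_rowsum (i p r : Fin n) :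
    ∑ k, F2 n i k p r = (if p = i then (1:ℂ) else 0) - (if r = i then 1 else 0) := by
  simp only [F2]
  rw [Finset.sum_sub_distrib]
  congr 1 <;> simp [ite_and, eq_comm]

lemma F2_totalsum : ∑ i : Fin n, ∑ k : Fin n, F2 n i k = 0 := by
  funext p r
  simp only [Finset.sum_apply, Pi.zero_apply]
  rw [Finset.sum_congr rfl (fun i _ => F2_rowsum i p r)]
  simp

lemma vv2_eq (a : Fin n → ℂ) (i j : Fin n) :
    vv2 a i j = F2 n i j - (a j / ∑ m, a m) • (∑ k, F2 n i k)
      + (a i / ∑ m, a m) • (∑ k, F2 n j k) := by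
  by_cases h : i = j
  · subst h; rw [vv2, if_pos rfl, F2_diag]; module
  · rw [vv2, if_neg h]
    have hc : (∑ l, F2 n l j) = -∑ k, F2 n j k := by
      rw [Finset.sum_congr rfl (fun l _ => F2_swap l j), Finset.sum_neg_distrib]
    rw [hc]; module

lemma vv2_swap (a : Fin n → ℂ) (i j : Fin n) : vv2 a j i = -vv2 a i j := by
  rw [vv2_eq, vv2_eq, F2_swap i j]
  module

lemma vv2_diag (a : Fin n → ℂ) (i : Fin n) : vv2 a i i = 0 := by
  rw [vv2, if_pos rfl]

lemma vv2_rowsum (a : Fin n → ℂ) (hA : (∑ m, a m) ≠ 0) (j : Fin n) :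
    ∑ k, vv2 a j k = 0 := by
  rw [Finset.sum_congr rfl (fun k _ => vv2_eq a j k)]
  rw [Finset.sum_add_distrib, Finset.sum_sub_distrib, ← Finset.smul_sum, ← Finset.sum_smul]
  have h1 : (∑ k : Fin n, a k / ∑ m, a m) = 1 := by
    rw [← Finset.sum_div, div_self hA]
  rw [h1, one_smul, F2_totalsum, smul_zero]
  simp

lemma W_lemma (a : Fin n → ℂ) (i j k : Fin n) :
    a k • vv2 a i j + a i • vv2 a j k + a j • vv2 a k i =
      a k • F2 n i j + a i • F2 n j k + a j • F2 n k i := by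
  rw [vv2_eq, vv2_eq, vv2_eq]
  match_scalars <;> ring

lemma rowsum_apply (i p r : Fin n) :
    (∑ k, F2 n i k) p r = (if p = i then (1:ℂ) else 0) - (if r = i then 1 else 0) := by
  rw [Finset.sum_apply, Finset.sum_apply]; exact F2_rowsum i p r

lemma vv2_cycsum (a : Fin n → ℂ) (i j α β γ : Fin n) :
    vv2 a i j α β + vv2 a i j β γ + vv2 a i j γ α =
      F2 n i j α β + F2 n i j β γ + F2 n i j γ α := by
  rw [vv2_eq]
  simp only [Pi.add_apply, Pi.sub_apply, Pi.smul_apply, smul_eq_mul, rowsum_apply]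
  ring

lemma collapse (c : Fin n → Fin n → ℂ) (α β : Fin n) :
    ∑ i, ∑ j, c i j * F2 n i j α β = c α β - c β α := by
  simp only [F2]
  have : ∀ i j : Fin n, c i j * ((if α = i ∧ β = j then (1:ℂ) else 0) -
      (if α = j ∧ β = i then 1 else 0)) =
      (if α = i ∧ β = j then c i j else 0) - (if α = j ∧ β = i then c i j else 0) := by
    intro i j; split_ifs <;> simp
  rw [Finset.sum_congr rfl (fun i _ => Finset.sum_congr rfl (fun j _ => this i j))]
  simp only [Finset.sum_sub_distrib]
  congr 1 <;> simp [ite_and, eq_comm]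

end AuxBasic

section AuxScalar
variable {n : ℕ}

set_option maxHeartbeats 1000000 in
lemma C_cocycle (b : Fin n → Fin 2 → ℂ) (z : Fin n → ℂ) (l j k m : Fin n)
    (h1 : dd2 b l j ≠ 0) (h2 : dd2 b j m ≠ 0) (h3 : dd2 b m l ≠ 0)
    (h4 : dd2 b j k ≠ 0) (h5 : dd2 b k m ≠ 0) (h6 : dd2 b m j ≠ 0)
    (h7 : dd2 b k l ≠ 0) (h8 : dd2 b l m ≠ 0) (h9 : dd2 b m k ≠ 0) :
    ff2 b z l j m ^ 2 / (dd2 b l j * dd2 b j m * dd2 b m l) +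
      ff2 b z j k m ^ 2 / (dd2 b j k * dd2 b k m * dd2 b m j) +
      ff2 b z k l m ^ 2 / (dd2 b k l * dd2 b l m * dd2 b m k) =
      ff2 b z l j k ^ 2 / (dd2 b l j * dd2 b j k * dd2 b k l) := by
  rw [div_add_div _ _ (by simp [h1,h2,h3, mul_ne_zero]) (by simp [h4,h5,h6, mul_ne_zero]),
    div_add_div _ _ (by simp [h1,h2,h3,h4,h5,h6, mul_ne_zero]) (by simp [h7,h8,h9, mul_ne_zero]),
    div_eq_div_iff (by simp [h1,h2,h3,h4,h5,h6,h7,h8,h9, mul_ne_zero]) (by simp [h1,h4,h7, mul_ne_zero])]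
  simp only [ff2, dd2]
  ring

lemma psi_split (b : Fin n → Fin 2 → ℂ) (z : Fin n → ℂ) (l j k m : Fin n)
    (h1 : dd2 b l j ≠ 0) (h2 : dd2 b k l ≠ 0) (h3 : dd2 b m l ≠ 0) :
    ff2 b z l j k / (dd2 b l j * dd2 b k l) =
      ff2 b z l j m / (dd2 b l j * dd2 b m l) -
      ff2 b z l k m / (dd2 b l k * dd2 b m l) := by
  have h2' : dd2 b l k ≠ 0 := by rw [dd2_swap]; exact neg_ne_zero.mpr h2
  field_simp
  simp only [ff2, dd2]
  ring

lemma phip_split (b : Fin n → Fin 2 → ℂ) (z : Fin n → ℂ) (i j k m : Fin n)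
    (h1 : dd2 b j m ≠ 0) (h2 : dd2 b m i ≠ 0) (h3 : dd2 b m k ≠ 0)
    (h4 : dd2 b k m ≠ 0) :
    ff2 b z i j m / (dd2 b j m * dd2 b m i) =
      ff2 b z i k m / (dd2 b k m * dd2 b m i) +
      ff2 b z k j m / (dd2 b j m * dd2 b m k) := by
  field_simp
  simp only [ff2, dd2]
  ring

lemma c_swap (b : Fin n → Fin 2 → ℂ) (z : Fin n → ℂ) (m i j : Fin n) :
    ff2 b z j i m ^ 2 / (dd2 b j i * dd2 b i m * dd2 b m j) =
      -(ff2 b z i j m ^ 2 / (dd2 b i j * dd2 b j m * dd2 b m i)) := by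
  have hnum : ff2 b z j i m ^ 2 = ff2 b z i j m ^ 2 := by simp only [ff2, dd2]; ring
  have hden : dd2 b j i * dd2 b i m * dd2 b m j =
      -(dd2 b i j * dd2 b j m * dd2 b m i) := by simp only [dd2]; ring
  rw [hnum, hden, div_neg]

end AuxScalar

section AuxDeriv
variable {n : ℕ}

noncomputable def ffL (b : Fin n → Fin 2 → ℂ) (i j k : Fin n) : (Fin n → ℂ) →L[ℂ] ℂ :=
  dd2 b j k • ContinuousLinearMap.proj i + dd2 b k i • ContinuousLinearMap.proj j
    + dd2 b i j • ContinuousLinearMap.proj k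

lemma ffL_apply (b : Fin n → Fin 2 → ℂ) (i j k : Fin n) (w : Fin n → ℂ) :
    ffL b i j k w = ff2 b w i j k := by
  simp [ffL, ff2, ContinuousLinearMap.proj_apply]

lemma hasFDeriv_coef (a : Fin n → ℂ) (b : Fin n → Fin 2 → ℂ) (m : Fin n) (z : Fin n → ℂ)
    (i j : Fin n) (D : ℂ) :
    HasFDerivAt (fun z => (ff2 b z i j m ^ 2 / D) • vv2 a i j)
      ((D⁻¹ • (ff2 b z i j m • ffL b i j m + ff2 b z i j m • ffL b i j m)).smulRight
        (vv2 a i j)) z := by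
  have h0 : HasFDerivAt (fun z : Fin n → ℂ => ff2 b z i j m) (ffL b i j m) z := by
    have := (ffL b i j m).hasFDerivAt (x := z)
    simpa only [funext fun w => ffL_apply b i j m w] using this
  have h1 := ((h0.mul h0).mul_const D⁻¹).smul_const (vv2 a i j)
  have he : (fun z : Fin n → ℂ => (ff2 b z i j m ^ 2 / D) • vv2 a i j) =
      (fun z => (ff2 b z i j m * ff2 b z i j m * D⁻¹) • vv2 a i j) := by
    funext w; rw [pow_two, div_eq_mul_inv]
  rw [he]
  exact h1

lemma fderiv_qmap2 (a : Fin n → ℂ) (b : Fin n → Fin 2 → ℂ) (m : Fin n) (z : Fin n → ℂ)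
    (l : Fin n) :
    fderiv ℂ (qmap2 a b m) z (Pi.single l 1) =
      ((∑ j, a j) ^ 2)⁻¹ • ∑ i, ∑ j ∈ Finset.univ.filter (fun j => i < j ∧ i ≠ m ∧ j ≠ m),
        (2 * ff2 b z i j m * ff2 b (Pi.single l 1) i j m /
          (dd2 b i j * dd2 b j m * dd2 b m i)) • vv2 a i j := by
  have hq : HasFDerivAt (qmap2 a b m)
      (((∑ j, a j) ^ 2)⁻¹ • ∑ i, ∑ j ∈ Finset.univ.filter (fun j => i < j ∧ i ≠ m ∧ j ≠ m),
        (((dd2 b i j * dd2 b j m * dd2 b m i)⁻¹ •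
          (ff2 b z i j m • ffL b i j m + ff2 b z i j m • ffL b i j m)).smulRight
            (vv2 a i j))) z := by
    have hsum : HasFDerivAt (fun z => ∑ i, ∑ j ∈ Finset.univ.filter
        (fun j => i < j ∧ i ≠ m ∧ j ≠ m),
        (ff2 b z i j m ^ 2 / (dd2 b i j * dd2 b j m * dd2 b m i)) • vv2 a i j)
        (∑ i, ∑ j ∈ Finset.univ.filter (fun j => i < j ∧ i ≠ m ∧ j ≠ m),
        (((dd2 b i j * dd2 b j m * dd2 b m i)⁻¹ •
          (ff2 b z i j m • ffL b i j m + ff2 b z i j m • ffL b i j m)).smulRight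
            (vv2 a i j))) z := by
      apply HasFDerivAt.fun_sum
      intro i _
      apply HasFDerivAt.fun_sum
      intro j _
      exact hasFDeriv_coef a b m z i j _
    have := hsum.const_smul ((∑ j, a j) ^ 2)⁻¹
    exact this
  rw [hq.fderiv]
  simp only [ContinuousLinearMap.smul_apply, ContinuousLinearMap.sum_apply,
    ContinuousLinearMap.smulRight_apply, ContinuousLinearMap.add_apply]
  congr 1
  refine Finset.sum_congr rfl fun i _ => Finset.sum_congr rfl fun j _ => ?_
  rw [ffL_apply]
  congr 1
  simp only [smul_eq_mul, div_eq_mul_inv]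
  ring

end AuxDeriv

section AuxFinset
variable {n : ℕ} {M : Type*} [AddCommGroup M] [Module ℂ M]

lemma half_sym (P : Fin n → Prop) [DecidablePred P] (g : Fin n → Fin n → M)
    (hg : ∀ i j, g i j = g j i) :
    ∑ i, ∑ j ∈ Finset.univ.filter (fun j => i < j ∧ P i ∧ P j), g i j
      = (2:ℂ)⁻¹ • ∑ i, ∑ j ∈ Finset.univ.filter (fun j => j ≠ i ∧ P i ∧ P j), g i j := by
  have hsplit : ∀ i : Fin n, Finset.univ.filter (fun j => j ≠ i ∧ P i ∧ P j)
      = Finset.univ.filter (fun j => i < j ∧ P i ∧ P j)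
        ∪ Finset.univ.filter (fun j => j < i ∧ P i ∧ P j) := by
    intro i; ext j
    simp only [mem_filter, mem_union, mem_univ, true_and]
    constructor
    · rintro ⟨h1, h2⟩
      rcases lt_or_gt_of_ne h1 with h | h
      · exact Or.inr ⟨h, h2⟩
      · exact Or.inl ⟨h, h2⟩
    · rintro (⟨h1, h2⟩ | ⟨h1, h2⟩)
      exacts [⟨ne_of_gt h1, h2⟩, ⟨ne_of_lt h1, h2⟩]
  have hdisj : ∀ i : Fin n,
      Disjoint (Finset.univ.filter (fun j => i < j ∧ P i ∧ P j))
        (Finset.univ.filter (fun j => j < i ∧ P i ∧ P j)) := by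
    intro i
    rw [Finset.disjoint_left]
    intro j hj1 hj2
    simp only [mem_filter] at hj1 hj2
    exact absurd hj2.2.1 (not_lt_of_gt hj1.2.1)
  have hmain : ∑ i, ∑ j ∈ Finset.univ.filter (fun j => j ≠ i ∧ P i ∧ P j), g i j
      = (∑ i, ∑ j ∈ Finset.univ.filter (fun j => i < j ∧ P i ∧ P j), g i j)
        + ∑ i, ∑ j ∈ Finset.univ.filter (fun j => j < i ∧ P i ∧ P j), g i j := by
    rw [← Finset.sum_add_distrib]
    refine Finset.sum_congr rfl fun i _ => ?_
    rw [hsplit i, Finset.sum_union (hdisj i)]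
  have hswap : ∑ i, ∑ j ∈ Finset.univ.filter (fun j => j < i ∧ P i ∧ P j), g i j
      = ∑ i, ∑ j ∈ Finset.univ.filter (fun j => i < j ∧ P i ∧ P j), g i j := by
    rw [Finset.sum_comm' (t' := Finset.univ)
      (s' := fun j => Finset.univ.filter (fun i => j < i ∧ P j ∧ P i))
      (by intro x y; simp only [mem_filter, mem_univ, true_and]; tauto)]
    exact Finset.sum_congr rfl fun j _ => Finset.sum_congr rfl fun i _ => hg i j
  rw [hmain, hswap, ← two_smul ℂ, smul_smul]
  norm_num

lemma swap_sum (Q : Fin n → Prop) [DecidablePred Q] (g : Fin n → Fin n → M) :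
    ∑ j, ∑ k ∈ Finset.univ.filter (fun k => k ≠ j ∧ Q j ∧ Q k), g j k
      = ∑ j, ∑ k ∈ Finset.univ.filter (fun k => k ≠ j ∧ Q j ∧ Q k), g k j := by
  rw [Finset.sum_comm' (t' := Finset.univ)
    (s' := fun k => Finset.univ.filter (fun j => j ≠ k ∧ Q k ∧ Q j))
    (by intro x y; simp only [mem_filter, mem_univ, true_and]; tauto)]

end AuxFinset


section AuxQ
variable {n : ℕ}

/-- gated coefficient of the symmetrized `q`. -/
noncomputable def cc2 (b : Fin n → Fin 2 → ℂ) (z : Fin n → ℂ) (m i j : Fin n) : ℂ :=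
  if j ≠ i ∧ i ≠ m ∧ j ≠ m then
    ff2 b z i j m ^ 2 / (dd2 b i j * dd2 b j m * dd2 b m i) else 0

lemma cc2_swap (b : Fin n → Fin 2 → ℂ) (z : Fin n → ℂ) (m i j : Fin n) :
    cc2 b z m j i = -cc2 b z m i j := by
  unfold cc2
  by_cases h : j ≠ i ∧ i ≠ m ∧ j ≠ m
  · rw [if_pos ⟨h.1.symm, h.2.2, h.2.1⟩, if_pos h, c_swap]
  · rw [if_neg (by tauto), if_neg h, neg_zero]

lemma q_sym (a : Fin n → ℂ) (b : Fin n → Fin 2 → ℂ) (m : Fin n) (z : Fin n → ℂ) :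
    qmap2 a b m z = ((∑ j, a j) ^ 2)⁻¹ • (2:ℂ)⁻¹ •
      ∑ i, ∑ j ∈ Finset.univ.filter (fun j => j ≠ i ∧ i ≠ m ∧ j ≠ m),
        (ff2 b z i j m ^ 2 / (dd2 b i j * dd2 b j m * dd2 b m i)) • vv2 a i j := by
  rw [qmap2]
  congr 1
  exact half_sym (fun t => t ≠ m)
    (fun i j => (ff2 b z i j m ^ 2 / (dd2 b i j * dd2 b j m * dd2 b m i)) • vv2 a i j)
    (fun i j => by
      simp only [c_swap b z m i j, vv2_swap a i j, neg_smul, smul_neg, neg_neg])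

lemma L2_apply (a : Fin n → ℂ) (i j k : Fin n) (x : Fin n → Fin n → ℂ) :
    L2 a i j k x = (x i j + x j k + x k i) •
      (a k • F2 n i j + a i • F2 n j k + a j • F2 n k i) := rfl

lemma L2_q (a : Fin n → ℂ) (b : Fin n → Fin 2 → ℂ) (m : Fin n) (z : Fin n → ℂ)
    (l j k : Fin n) :
    L2 a l j k (qmap2 a b m z) =
      (((∑ t, a t) ^ 2)⁻¹ * (cc2 b z m l j + cc2 b z m j k + cc2 b z m k l)) •
        (a k • F2 n l j + a l • F2 n j k + a j • F2 n k l) := by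
  rw [q_sym, L2_apply]
  congr 1
  have hS : ∀ α β : Fin n,
      (∑ i, ∑ j' ∈ Finset.univ.filter (fun j' => j' ≠ i ∧ i ≠ m ∧ j' ≠ m),
        (ff2 b z i j' m ^ 2 / (dd2 b i j' * dd2 b j' m * dd2 b m i)) • vv2 a i j') α β
      = ∑ i, ∑ j' : Fin n, cc2 b z m i j' * vv2 a i j' α β := by
    intro α β
    rw [Finset.sum_apply, Finset.sum_apply]
    refine Finset.sum_congr rfl fun i _ => ?_
    rw [Finset.sum_apply, Finset.sum_apply, Finset.sum_filter]
    refine Finset.sum_congr rfl fun j' _ => ?_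
    unfold cc2
    split_ifs with h
    · simp
    · simp
  simp only [Pi.smul_apply, smul_eq_mul, hS]
  have key : ∑ i, ∑ j' : Fin n, cc2 b z m i j' * vv2 a i j' l j
      + ∑ i, ∑ j' : Fin n, cc2 b z m i j' * vv2 a i j' j k
      + ∑ i, ∑ j' : Fin n, cc2 b z m i j' * vv2 a i j' k l
      = 2 * (cc2 b z m l j + cc2 b z m j k + cc2 b z m k l) := by
    rw [← Finset.sum_add_distrib, ← Finset.sum_add_distrib]
    have : ∀ i : Fin n, (∑ j' : Fin n, cc2 b z m i j' * vv2 a i j' l j)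
        + (∑ j' : Fin n, cc2 b z m i j' * vv2 a i j' j k)
        + (∑ j' : Fin n, cc2 b z m i j' * vv2 a i j' k l)
        = ∑ j' : Fin n, (cc2 b z m i j' * F2 n i j' l j
          + cc2 b z m i j' * F2 n i j' j k + cc2 b z m i j' * F2 n i j' k l) := by
      intro i
      rw [← Finset.sum_add_distrib, ← Finset.sum_add_distrib]
      refine Finset.sum_congr rfl fun j' _ => ?_
      rw [← mul_add, ← mul_add, ← mul_add, ← mul_add, vv2_cycsum]
    rw [Finset.sum_congr rfl fun i _ => this i]
    rw [Finset.sum_congr rfl fun i _ => Finset.sum_add_distrib,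
      Finset.sum_add_distrib]
    rw [Finset.sum_congr rfl fun i _ => (Finset.sum_add_distrib
      (f := fun j' => cc2 b z m i j' * F2 n i j' l j)
      (g := fun j' => cc2 b z m i j' * F2 n i j' j k)), Finset.sum_add_distrib]
    rw [collapse, collapse, collapse]
    rw [cc2_swap b z m l j, cc2_swap b z m j k, cc2_swap b z m k l]
    ring
  linear_combination (((∑ t, a t) ^ 2)⁻¹ * (2:ℂ)⁻¹) * key

end AuxQ


section AuxT
variable {n : ℕ}

/-- The key scalar reduction: `(d_{jk}/f_{ljk}) · Ŝ = f_{ljk}/(d_{lj} d_{kl})`. -/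
lemma T_lemma (b : Fin n → Fin 2 → ℂ) (z : Fin n → ℂ) (m l j k : Fin n)
    (hd : ∀ i j : Fin n, i ≠ j → dd2 b i j ≠ 0)
    (hf : ff2 b z l j k ≠ 0)
    (hjl : j ≠ l) (hkl : k ≠ l) (hkj : k ≠ j) :
    dd2 b j k / ff2 b z l j k * (cc2 b z m l j + cc2 b z m j k + cc2 b z m k l)
      = ff2 b z l j k / (dd2 b l j * dd2 b k l) := by
  have hdlj := hd l j hjl.symm
  have hdkl := hd k l hkl
  have hdjk := hd j k hkj.symm
  unfold cc2
  by_cases hml : m = l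
  · subst hml
    rw [if_neg (by tauto), if_pos ⟨hkj, hjl, hkl⟩, if_neg (by tauto)]
    rw [ff2_cyc b z m j k]
    field_simp
    ring
  by_cases hmj : m = j
  · subst hmj
    rw [if_neg (by tauto), if_neg (by tauto),
      if_pos ⟨fun h => hkl h.symm, hkj, hjl.symm⟩]
    rw [ff2_cyc b z m k l, ff2_cyc b z l m k]
    field_simp
    ring
  by_cases hmk : m = k
  · subst hmk
    rw [if_pos ⟨hjl, hkl.symm, hkj.symm⟩, if_neg (by tauto), if_neg (by tauto)]
    field_simp
    ring
  · rw [if_pos ⟨hjl, fun h => hml h.symm, fun h => hmj h.symm⟩,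
      if_pos ⟨hkj, fun h => hmj h.symm, fun h => hmk h.symm⟩,
      if_pos ⟨fun h => hkl h.symm, fun h => hmk h.symm, fun h => hml h.symm⟩]
    rw [C_cocycle b z l j k m hdlj (hd j m (fun h => hmj h.symm)) (hd m l hml)
      hdjk (hd k m (fun h => hmk h.symm)) (hd m j hmj) hdkl (hd l m (fun h => hml h.symm))
      (hd m k hmk)]
    field_simp

lemma psi_swap (b : Fin n → Fin 2 → ℂ) (z : Fin n → ℂ) (l j k : Fin n) :
    ff2 b z l k j / (dd2 b l k * dd2 b j l) =
      -(ff2 b z l j k / (dd2 b l j * dd2 b k l)) := by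
  have h1 : ff2 b z l k j = -ff2 b z l j k := ff2_swap23 b z l j k
  have h2 : dd2 b l k * dd2 b j l = dd2 b l j * dd2 b k l := by
    simp only [dd2]; ring
  rw [h1, h2, neg_div]

lemma W_swap (a : Fin n → ℂ) (l j k : Fin n) :
    a j • F2 n l k + a l • F2 n k j + a k • F2 n j l =
      -(a k • F2 n l j + a l • F2 n j k + a j • F2 n k l) := by
  rw [F2_swap l k, F2_swap k j, F2_swap j l]
  module

lemma thet_swap (b : Fin n → Fin 2 → ℂ) (z w : Fin n → ℂ) (m i j : Fin n) :
    2 * ff2 b z j i m * ff2 b w j i m / (dd2 b j i * dd2 b i m * dd2 b m j) =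
      -(2 * ff2 b z i j m * ff2 b w i j m / (dd2 b i j * dd2 b j m * dd2 b m i)) := by
  have h1 : 2 * ff2 b z j i m * ff2 b w j i m = 2 * ff2 b z i j m * ff2 b w i j m := by
    simp only [ff2, dd2]; ring
  have h2 : dd2 b j i * dd2 b i m * dd2 b m j =
      -(dd2 b i j * dd2 b j m * dd2 b m i) := by simp only [dd2]; ring
  rw [h1, h2, div_neg]

end AuxT

section AuxSums
variable {n : ℕ} {M : Type*} [AddCommGroup M]

lemma sum_filter_two (h : Fin n → M) (j l : Fin n) (hjl : j ≠ l) :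
    ∑ k ∈ Finset.univ.filter (fun k => k ≠ j ∧ k ≠ l), h k =
      (∑ k, h k) - h l - h j := by
  have e1 : Finset.univ.filter (fun k => k ≠ j ∧ k ≠ l) =
      (Finset.univ.erase l).erase j := by
    ext k; simp only [mem_filter, mem_erase, mem_univ, true_and, and_true]
  rw [e1, Finset.sum_erase_eq_sub (by simp [hjl]),
    Finset.sum_erase_eq_sub (Finset.mem_univ l)]

lemma sum_filter_three (h : Fin n → M) (j k m : Fin n)
    (hjk : j ≠ k) (hjm : j ≠ m) (hkm : k ≠ m) :
    ∑ t ∈ Finset.univ.filter (fun t => t ≠ j ∧ t ≠ k ∧ t ≠ m), h t =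
      (∑ t, h t) - h m - h k - h j := by
  have e1 : Finset.univ.filter (fun t => t ≠ j ∧ t ≠ k ∧ t ≠ m) =
      (((Finset.univ.erase m).erase k).erase j) := by
    ext t; simp only [mem_filter, mem_erase, mem_univ, true_and, and_true]
  rw [e1, Finset.sum_erase_eq_sub (by simp [hjk, hjm]),
    Finset.sum_erase_eq_sub (by simp [hkm]),
    Finset.sum_erase_eq_sub (Finset.mem_univ m)]

end AuxSums


section AuxRed
variable {n : ℕ}

lemma LHS_red (a : Fin n → ℂ) (b : Fin n → Fin 2 → ℂ) (m : Fin n) (z : Fin n → ℂ)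
    (l : Fin n) :
    fderiv ℂ (qmap2 a b m) z (Pi.single l 1) = ((∑ j, a j) ^ 2)⁻¹ • (2:ℂ)⁻¹ •
      ∑ i, ∑ j ∈ Finset.univ.filter (fun j => j ≠ i ∧ i ≠ m ∧ j ≠ m),
        (2 * ff2 b z i j m * ff2 b (Pi.single l 1) i j m /
          (dd2 b i j * dd2 b j m * dd2 b m i)) • vv2 a i j := by
  rw [fderiv_qmap2]
  congr 1
  exact half_sym (fun t => t ≠ m) _ (fun i j => by
    simp only [thet_swap b z (Pi.single l 1) m i j, vv2_swap a i j, neg_smul,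
      smul_neg, neg_neg])

lemma RHS_red (a : Fin n → ℂ) (b : Fin n → Fin 2 → ℂ) (m : Fin n) (z : Fin n → ℂ)
    (l : Fin n)
    (hd : ∀ i j : Fin n, i ≠ j → dd2 b i j ≠ 0)
    (hz : ∀ i j k : Fin n, i ≠ j → i ≠ k → j ≠ k → ff2 b z i j k ≠ 0) :
    K2 a b z l (qmap2 a b m z) = ((∑ j, a j) ^ 2)⁻¹ • (2:ℂ)⁻¹ •
      ∑ j, ∑ k ∈ Finset.univ.filter (fun k => k ≠ j ∧ j ≠ l ∧ k ≠ l),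
        (ff2 b z l j k / (dd2 b l j * dd2 b k l)) •
          (a k • F2 n l j + a l • F2 n j k + a j • F2 n k l) := by
  have h1 : K2 a b z l (qmap2 a b m z) = ∑ j ∈ Finset.univ.erase l,
      ∑ k ∈ Finset.univ.filter (fun k => j < k ∧ k ≠ l),
      ((∑ t, a t) ^ 2)⁻¹ • ((ff2 b z l j k / (dd2 b l j * dd2 b k l)) •
        (a k • F2 n l j + a l • F2 n j k + a j • F2 n k l)) := by
    rw [K2]
    simp only [LinearMap.coe_sum, Finset.sum_apply, LinearMap.smul_apply]
    refine Finset.sum_congr rfl fun j hj => Finset.sum_congr rfl fun k hk => ?_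
    have hjl : j ≠ l := (Finset.mem_erase.mp hj).1
    obtain ⟨hjk, hkl⟩ := (Finset.mem_filter.mp hk).2
    have hkj : k ≠ j := hjk.ne'
    rw [L2_q a b m z l j k, smul_smul, smul_smul]
    congr 1
    have hT := T_lemma b z m l j k hd (hz l j k hjl.symm hkl.symm hjk.ne) hjl hkl hkj
    calc dd2 b j k / ff2 b z l j k * (((∑ t, a t) ^ 2)⁻¹ *
          (cc2 b z m l j + cc2 b z m j k + cc2 b z m k l))
        = ((∑ t, a t) ^ 2)⁻¹ * (dd2 b j k / ff2 b z l j k *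
          (cc2 b z m l j + cc2 b z m j k + cc2 b z m k l)) := by ring
      _ = ((∑ t, a t) ^ 2)⁻¹ * (ff2 b z l j k / (dd2 b l j * dd2 b k l)) := by rw [hT]
  have h2 : ∑ j ∈ Finset.univ.erase l,
      ∑ k ∈ Finset.univ.filter (fun k => j < k ∧ k ≠ l),
      ((∑ t, a t) ^ 2)⁻¹ • ((ff2 b z l j k / (dd2 b l j * dd2 b k l)) •
        (a k • F2 n l j + a l • F2 n j k + a j • F2 n k l))
      = ∑ j, ∑ k ∈ Finset.univ.filter (fun k => j < k ∧ j ≠ l ∧ k ≠ l),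
      ((∑ t, a t) ^ 2)⁻¹ • ((ff2 b z l j k / (dd2 b l j * dd2 b k l)) •
        (a k • F2 n l j + a l • F2 n j k + a j • F2 n k l)) := by
    rw [← Finset.filter_ne' Finset.univ l, Finset.sum_filter]
    refine Finset.sum_congr rfl fun j _ => ?_
    by_cases hjl : j ≠ l
    · rw [if_pos hjl]
      congr 1
      ext k
      simp only [Finset.mem_filter, Finset.mem_univ, true_and]
      tauto
    · rw [if_neg hjl]
      symm
      apply Finset.sum_eq_zero
      intro k hk
      exact absurd (Finset.mem_filter.mp hk).2.2.1 hjl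
  rw [h1, h2, half_sym (fun t => t ≠ l) _ (fun j k => by
    simp only [psi_swap b z l j k, W_swap a l j k, neg_smul, smul_neg, neg_neg])]
  rw [Finset.sum_congr rfl (fun j (_ : j ∈ Finset.univ) => (Finset.smul_sum
    (r := ((∑ t, a t) ^ 2)⁻¹)).symm), ← Finset.smul_sum, smul_comm]

end AuxRed


section AuxCore
variable {n : ℕ}

lemma inner_vv (a : Fin n → ℂ) (hA : (∑ m, a m) ≠ 0) (j l : Fin n) (hjl : j ≠ l) :
    ∑ k ∈ Finset.univ.filter (fun k => k ≠ j ∧ k ≠ l), vv2 a j k = vv2 a l j := by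
  rw [sum_filter_two (vv2 a j) j l hjl, vv2_rowsum a hA j, vv2_diag, vv2_swap a l j]
  abel

/-- Common RHS processing: `∑ ψ•w = 2•T1 + T2`. -/
lemma RHS_step (a : Fin n → ℂ) (b : Fin n → Fin 2 → ℂ) (z : Fin n → ℂ) (l : Fin n) :
    ∑ j, ∑ k ∈ Finset.univ.filter (fun k => k ≠ j ∧ j ≠ l ∧ k ≠ l),
        (ff2 b z l j k / (dd2 b l j * dd2 b k l)) •
          (a k • F2 n l j + a l • F2 n j k + a j • F2 n k l)
      = (2:ℂ) • (∑ j, ∑ k ∈ Finset.univ.filter (fun k => k ≠ j ∧ j ≠ l ∧ k ≠ l),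
          (ff2 b z l j k / (dd2 b l j * dd2 b k l) * a k) • vv2 a l j)
        + ∑ j, ∑ k ∈ Finset.univ.filter (fun k => k ≠ j ∧ j ≠ l ∧ k ≠ l),
          (ff2 b z l j k / (dd2 b l j * dd2 b k l) * a l) • vv2 a j k := by
  have e1 : ∀ j k : Fin n,
      (ff2 b z l j k / (dd2 b l j * dd2 b k l)) •
        (a k • F2 n l j + a l • F2 n j k + a j • F2 n k l)
      = (ff2 b z l j k / (dd2 b l j * dd2 b k l) * a k) • vv2 a l j
        + (ff2 b z l j k / (dd2 b l j * dd2 b k l) * a l) • vv2 a j k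
        + (ff2 b z l j k / (dd2 b l j * dd2 b k l) * a j) • vv2 a k l := by
    intro j k
    rw [← W_lemma a l j k, smul_add, smul_add, smul_smul, smul_smul, smul_smul]
  rw [Finset.sum_congr rfl fun j _ => Finset.sum_congr rfl fun k _ => e1 j k]
  rw [Finset.sum_congr rfl fun j (_ : j ∈ Finset.univ) => Finset.sum_add_distrib,
    Finset.sum_add_distrib]
  rw [Finset.sum_congr rfl fun j (_ : j ∈ Finset.univ) => (Finset.sum_add_distrib
    (f := fun k => (ff2 b z l j k / (dd2 b l j * dd2 b k l) * a k) • vv2 a l j)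
    (g := fun k => (ff2 b z l j k / (dd2 b l j * dd2 b k l) * a l) • vv2 a j k)),
    Finset.sum_add_distrib]
  have e2 : ∑ j, ∑ k ∈ Finset.univ.filter (fun k => k ≠ j ∧ j ≠ l ∧ k ≠ l),
      (ff2 b z l j k / (dd2 b l j * dd2 b k l) * a j) • vv2 a k l
      = ∑ j, ∑ k ∈ Finset.univ.filter (fun k => k ≠ j ∧ j ≠ l ∧ k ≠ l),
      (ff2 b z l j k / (dd2 b l j * dd2 b k l) * a k) • vv2 a l j := by
    rw [swap_sum (fun t => t ≠ l)
      (fun j k => (ff2 b z l j k / (dd2 b l j * dd2 b k l) * a j) • vv2 a k l)]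
    refine Finset.sum_congr rfl fun j _ => Finset.sum_congr rfl fun k _ => ?_
    rw [psi_swap b z l j k, vv2_swap a l j, neg_mul, neg_smul, smul_neg, neg_neg]
  rw [e2, two_smul]
  abel

end AuxCore


section CoreNe
variable {n : ℕ}

lemma core_ne (a : Fin n → ℂ) (b : Fin n → Fin 2 → ℂ) (m : Fin n) (z : Fin n → ℂ)
    (l : Fin n) (hA : (∑ t, a t) ≠ 0)
    (hd : ∀ i j : Fin n, i ≠ j → dd2 b i j ≠ 0) (hlm : l ≠ m) :
    ((∑ t, a t) / 2) • ∑ i, ∑ j ∈ Finset.univ.filter (fun j => j ≠ i ∧ i ≠ m ∧ j ≠ m),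
        (2 * ff2 b z i j m * ff2 b (Pi.single l 1) i j m /
          (dd2 b i j * dd2 b j m * dd2 b m i)) • vv2 a i j
      = ∑ j, ∑ k ∈ Finset.univ.filter (fun k => k ≠ j ∧ j ≠ l ∧ k ≠ l),
        (ff2 b z l j k / (dd2 b l j * dd2 b k l)) •
          (a k • F2 n l j + a l • F2 n j k + a j • F2 n k l) := by
  set A := ∑ t, a t with hAdef
  set Phi : Fin n → ℂ :=
    fun t => if t = m then 0 else ff2 b z l t m / (dd2 b l t * dd2 b m l) with hPhi
  set B := ∑ k, Phi k * a k with hB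
  have hPhim : Phi m = 0 := by simp [hPhi]
  have hPhine : ∀ t : Fin n, t ≠ m →
      Phi t = ff2 b z l t m / (dd2 b l t * dd2 b m l) := by
    intro t ht; simp [hPhi, ht]
  -- `θ_{l x} = 2 Φ x` for `x ≠ l`
  have hfll : ∀ x : Fin n, x ≠ l → ff2 b (Pi.single l 1) l x m = dd2 b x m := by
    intro x hx
    simp [ff2, Pi.single_apply, hx, Ne.symm hlm]
  have hth : ∀ x : Fin n, x ≠ l →
      2 * ff2 b z l x m * ff2 b (Pi.single l 1) l x m /
        (dd2 b l x * dd2 b x m * dd2 b m l) = 2 * Phi x := by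
    intro x hx
    rw [hfll x hx]
    by_cases hxm : x = m
    · subst hxm
      rw [hPhim, dd2_diag, mul_zero, mul_zero, zero_div, mul_zero]
    · rw [hPhine x hxm]
      have hdxm := hd x m hxm
      rw [show dd2 b l x * dd2 b x m * dd2 b m l
          = dd2 b x m * (dd2 b l x * dd2 b m l) from by ring,
        show (2:ℂ) * ff2 b z l x m * dd2 b x m
          = dd2 b x m * (2 * ff2 b z l x m) from by ring,
        mul_div_mul_left _ _ hdxm, mul_div_assoc]
  -- rows with `i ≠ l`
  have hrow : ∀ i : Fin n, i ≠ l →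
      (∑ j ∈ Finset.univ.filter (fun j => j ≠ i ∧ i ≠ m ∧ j ≠ m),
        (2 * ff2 b z i j m * ff2 b (Pi.single l 1) i j m /
          (dd2 b i j * dd2 b j m * dd2 b m i)) • vv2 a i j)
        = (2 * Phi i) • vv2 a l i := by
    intro i hi
    rw [Finset.sum_eq_single l ?h0 ?h1]
    · rw [thet_swap b z (Pi.single l 1) m l i, vv2_swap a l i, neg_smul, smul_neg,
        neg_neg, hth i hi]
    case h0 =>
      intro x _ hxl
      have hfl0 : ff2 b (Pi.single l 1) i x m = 0 := by
        simp [ff2, Pi.single_apply, hi, hxl, Ne.symm hlm]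
      rw [hfl0, mul_zero, zero_div, zero_smul]
    case h1 =>
      intro hl
      simp only [Finset.mem_filter, Finset.mem_univ, true_and, not_and, ne_eq,
        not_not] at hl
      have him : i = m := by
        by_contra him
        exact absurd (hl (fun h => hi h.symm) him) hlm
      rw [him, dd2_diag, mul_zero, div_zero, zero_smul]
  -- the row `i = l`
  have hrowl : ∀ s : Finset (Fin n), s = Finset.univ.filter (fun j => j ≠ l ∧ l ≠ m ∧ j ≠ m) →
      (∑ j ∈ s,
        (2 * ff2 b z l j m * ff2 b (Pi.single l 1) l j m /
          (dd2 b l j * dd2 b j m * dd2 b m l)) • vv2 a l j)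
        = (2:ℂ) • ∑ j, Phi j • vv2 a l j := by
    intro s hs
    subst hs
    rw [Finset.sum_congr rfl (fun j hj =>
      by rw [hth j (Finset.mem_filter.mp hj).2.1])]
    rw [Finset.sum_subset (Finset.filter_subset _ _) ?hz]
    · rw [Finset.smul_sum]
      exact Finset.sum_congr rfl fun j _ => (smul_smul (2:ℂ) (Phi j) _).symm
    case hz =>
      intro j _ hj
      simp only [Finset.mem_filter, Finset.mem_univ, true_and, not_and, ne_eq,
        not_not] at hj
      by_cases hjl : j = l
      · rw [hjl, vv2_diag, smul_zero]
      · have hjm : j = m := by tauto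
        rw [hjm, hPhim, mul_zero, zero_smul]
  -- LHS assembled
  have hLHS : (∑ i, ∑ j ∈ Finset.univ.filter (fun j => j ≠ i ∧ i ≠ m ∧ j ≠ m),
      (2 * ff2 b z i j m * ff2 b (Pi.single l 1) i j m /
        (dd2 b i j * dd2 b j m * dd2 b m i)) • vv2 a i j)
      = (2:ℂ) • (∑ j, Phi j • vv2 a l j) + (2:ℂ) • (∑ j, Phi j • vv2 a l j) := by
    rw [← Finset.add_sum_erase _ _ (Finset.mem_univ l)]
    congr 1
    · exact hrowl _ rfl
    · rw [Finset.sum_congr rfl (fun i hi => hrow i (Finset.mem_erase.mp hi).1)]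
      rw [Finset.sum_erase_eq_sub (Finset.mem_univ l), vv2_diag, smul_zero, sub_zero]
      rw [Finset.smul_sum]
      exact Finset.sum_congr rfl fun j _ => (smul_smul (2:ℂ) (Phi j) _).symm
  -- ψ = Φ_j - Φ_k
  have hpsihat : ∀ j k : Fin n, j ≠ l → k ≠ l → k ≠ j →
      ff2 b z l j k / (dd2 b l j * dd2 b k l) = Phi j - Phi k := by
    intro j k hjl hkl hkj
    by_cases hkm : k = m
    · rw [hkm, hPhim, hPhine j (by rw [← hkm]; exact Ne.symm hkj), sub_zero]
    · by_cases hjm : j = m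
      · rw [hjm, hPhim, hPhine k hkm, zero_sub]
        have h1 : ff2 b z l m k = -ff2 b z l k m := ff2_swap23 b z l k m
        have h2 : dd2 b l m * dd2 b k l = dd2 b l k * dd2 b m l := by
          simp only [dd2]; ring
        rw [h1, h2, neg_div]
      · rw [hPhine j hjm, hPhine k hkm]
        exact psi_split b z l j k m (hd l j (Ne.symm hjl)) (hd k l hkl)
          (hd m l (Ne.symm hlm))
  -- T1
  have hT1 : (∑ j, ∑ k ∈ Finset.univ.filter (fun k => k ≠ j ∧ j ≠ l ∧ k ≠ l),
      (ff2 b z l j k / (dd2 b l j * dd2 b k l) * a k) • vv2 a l j)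
      = (A - a l) • ∑ j, Phi j • vv2 a l j := by
    have hin : ∀ j : Fin n,
        ∑ k ∈ Finset.univ.filter (fun k => k ≠ j ∧ j ≠ l ∧ k ≠ l),
          (ff2 b z l j k / (dd2 b l j * dd2 b k l) * a k) • vv2 a l j
        = (Phi j * (A - a l) - (B - Phi l * a l)) • vv2 a l j := by
      intro j
      by_cases hjl : j = l
      · subst hjl
        rw [Finset.filter_false_of_mem (fun k _ h => h.2.1 rfl), Finset.sum_empty,
          vv2_diag, smul_zero]
      · have hfeq : Finset.univ.filter (fun k => k ≠ j ∧ j ≠ l ∧ k ≠ l)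
            = Finset.univ.filter (fun k => k ≠ j ∧ k ≠ l) := by
          ext k
          simp only [Finset.mem_filter, Finset.mem_univ, true_and]
          tauto
        rw [hfeq, ← Finset.sum_smul]
        congr 1
        rw [Finset.sum_congr rfl (fun k hk => by
          rw [hpsihat j k hjl (Finset.mem_filter.mp hk).2.2
            (Finset.mem_filter.mp hk).2.1, sub_mul])]
        rw [Finset.sum_sub_distrib, ← Finset.mul_sum,
          sum_filter_two a j l hjl,
          sum_filter_two (fun k => Phi k * a k) j l hjl]
        rw [hB]
        ring
    rw [Finset.sum_congr rfl fun j _ => hin j]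
    have e : ∀ j : Fin n, (Phi j * (A - a l) - (B - Phi l * a l)) • vv2 a l j
        = (A - a l) • (Phi j • vv2 a l j) - (B - Phi l * a l) • vv2 a l j := by
      intro j
      rw [sub_smul, smul_smul, mul_comm]
    rw [Finset.sum_congr rfl fun j _ => e j, Finset.sum_sub_distrib,
      ← Finset.smul_sum, ← Finset.smul_sum, vv2_rowsum a hA l, smul_zero, sub_zero]
  -- T2
  have hT2 : (∑ j, ∑ k ∈ Finset.univ.filter (fun k => k ≠ j ∧ j ≠ l ∧ k ≠ l),
      (ff2 b z l j k / (dd2 b l j * dd2 b k l) * a l) • vv2 a j k)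
      = (2:ℂ) • (a l • ∑ j, Phi j • vv2 a l j) := by
    rw [Finset.sum_congr rfl fun j _ => Finset.sum_congr rfl fun k hk => by
      rw [hpsihat j k (Finset.mem_filter.mp hk).2.2.1 (Finset.mem_filter.mp hk).2.2.2
        (Finset.mem_filter.mp hk).2.1, sub_mul, sub_smul]]
    rw [Finset.sum_congr rfl fun j (_ : j ∈ Finset.univ) => Finset.sum_sub_distrib _ _,
      Finset.sum_sub_distrib]
    have hS2 : ∑ j, ∑ k ∈ Finset.univ.filter (fun k => k ≠ j ∧ j ≠ l ∧ k ≠ l),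
        (Phi k * a l) • vv2 a j k
        = -∑ j, ∑ k ∈ Finset.univ.filter (fun k => k ≠ j ∧ j ≠ l ∧ k ≠ l),
        (Phi j * a l) • vv2 a j k := by
      rw [swap_sum (fun t => t ≠ l) (fun j k => (Phi k * a l) • vv2 a j k)]
      rw [← Finset.sum_neg_distrib]
      refine Finset.sum_congr rfl fun j _ => ?_
      rw [← Finset.sum_neg_distrib]
      refine Finset.sum_congr rfl fun k _ => ?_
      rw [vv2_swap a j k, smul_neg]
    have hS1 : ∑ j, ∑ k ∈ Finset.univ.filter (fun k => k ≠ j ∧ j ≠ l ∧ k ≠ l),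
        (Phi j * a l) • vv2 a j k
        = a l • ∑ j, Phi j • vv2 a l j := by
      have hin : ∀ j : Fin n, ∑ k ∈ Finset.univ.filter (fun k => k ≠ j ∧ j ≠ l ∧ k ≠ l),
          (Phi j * a l) • vv2 a j k = a l • (Phi j • vv2 a l j) := by
        intro j
        by_cases hjl : j = l
        · subst hjl
          rw [Finset.filter_false_of_mem (fun k _ h => h.2.1 rfl), Finset.sum_empty,
            vv2_diag, smul_zero, smul_zero]
        · have hfeq : Finset.univ.filter (fun k => k ≠ j ∧ j ≠ l ∧ k ≠ l)
              = Finset.univ.filter (fun k => k ≠ j ∧ k ≠ l) := by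
            ext k
            simp only [Finset.mem_filter, Finset.mem_univ, true_and]
            tauto
          rw [hfeq, ← Finset.smul_sum, inner_vv a hA j l hjl, smul_smul,
            mul_comm (Phi j) (a l)]
      rw [Finset.sum_congr rfl fun j _ => hin j, ← Finset.smul_sum]
    rw [hS1, hS2, hS1]
    module
  -- conclude
  rw [hLHS, RHS_step a b z l, hT1, hT2]
  match_scalars
  ring

end CoreNe


section CoreEq
variable {n : ℕ}

noncomputable def Psi2 (b : Fin n → Fin 2 → ℂ) (z : Fin n → ℂ) (m j k : Fin n) : ℂ :=
  ff2 b z j k m / (dd2 b k m * dd2 b m j)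

noncomputable def tau2 (a : Fin n → ℂ) (b : Fin n → Fin 2 → ℂ) (z : Fin n → ℂ)
    (m j : Fin n) : ℂ :=
  ∑ k ∈ Finset.univ.filter (fun k => k ≠ j ∧ k ≠ m), Psi2 b z m j k * a k

lemma Psi2_swap (b : Fin n → Fin 2 → ℂ) (z : Fin n → ℂ) (m j k : Fin n) :
    Psi2 b z m k j = -Psi2 b z m j k := by
  unfold Psi2
  rw [ff2_swap b z j k m, show dd2 b j m * dd2 b m k = dd2 b k m * dd2 b m j from by
    simp only [dd2]; ring, neg_div]

lemma tau2_diff (a : Fin n → ℂ) (b : Fin n → Fin 2 → ℂ) (z : Fin n → ℂ) (m : Fin n)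
    (hd : ∀ i j : Fin n, i ≠ j → dd2 b i j ≠ 0) (j k : Fin n)
    (hjm : j ≠ m) (hkm : k ≠ m) (hkj : k ≠ j) :
    tau2 a b z m j - tau2 a b z m k = ((∑ t, a t) - a m) * Psi2 b z m j k := by
  have hins_j : Finset.univ.filter (fun t => t ≠ j ∧ t ≠ m)
      = insert k (Finset.univ.filter (fun t => t ≠ j ∧ t ≠ k ∧ t ≠ m)) := by
    ext t
    simp only [Finset.mem_insert, Finset.mem_filter, Finset.mem_univ, true_and]
    by_cases htk : t = k
    · subst htk; tauto
    · tauto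
  have hins_k : Finset.univ.filter (fun t => t ≠ k ∧ t ≠ m)
      = insert j (Finset.univ.filter (fun t => t ≠ j ∧ t ≠ k ∧ t ≠ m)) := by
    ext t
    simp only [Finset.mem_insert, Finset.mem_filter, Finset.mem_univ, true_and]
    by_cases htj : t = j
    · subst htj; tauto
    · tauto
  unfold tau2
  rw [hins_j, hins_k, Finset.sum_insert (by simp), Finset.sum_insert (by simp)]
  have hPs : Psi2 b z m k j = -Psi2 b z m j k := Psi2_swap b z m j k
  have hsum : ∑ t ∈ Finset.univ.filter (fun t => t ≠ j ∧ t ≠ k ∧ t ≠ m),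
      Psi2 b z m j t * a t
      - ∑ t ∈ Finset.univ.filter (fun t => t ≠ j ∧ t ≠ k ∧ t ≠ m),
      Psi2 b z m k t * a t
      = Psi2 b z m j k * ((∑ t, a t) - a m - a k - a j) := by
    rw [← Finset.sum_sub_distrib]
    rw [Finset.sum_congr rfl (fun t ht => by
      obtain ⟨htj, htk, htm⟩ := (Finset.mem_filter.mp ht).2
      have hsp := phip_split b z j t k m (hd t m htm) (hd m j (Ne.symm hjm))
        (hd m k (Ne.symm hkm)) (hd k m hkm)
      have : Psi2 b z m j t * a t - Psi2 b z m k t * a t = Psi2 b z m j k * a t := by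
        unfold Psi2
        linear_combination a t * hsp
      exact this)]
    rw [← Finset.mul_sum, sum_filter_three a j k m (Ne.symm hkj) hjm hkm]
  linear_combination hsum - a j * hPs

lemma key_eq (a : Fin n → ℂ) (b : Fin n → Fin 2 → ℂ) (z : Fin n → ℂ) (m : Fin n)
    (hA : (∑ t, a t) ≠ 0) (hd : ∀ i j : Fin n, i ≠ j → dd2 b i j ≠ 0) :
    ((∑ t, a t) - a m) • (∑ j, ∑ k ∈ Finset.univ.filter
        (fun k => k ≠ j ∧ j ≠ m ∧ k ≠ m), Psi2 b z m j k • vv2 a j k)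
      = (2:ℂ) • ∑ j, tau2 a b z m j • vv2 a m j := by
  have hstep : ∀ j : Fin n, ((∑ t, a t) - a m) •
      (∑ k ∈ Finset.univ.filter (fun k => k ≠ j ∧ j ≠ m ∧ k ≠ m),
        Psi2 b z m j k • vv2 a j k)
      = (∑ k ∈ Finset.univ.filter (fun k => k ≠ j ∧ j ≠ m ∧ k ≠ m),
          tau2 a b z m j • vv2 a j k)
        - ∑ k ∈ Finset.univ.filter (fun k => k ≠ j ∧ j ≠ m ∧ k ≠ m),
          tau2 a b z m k • vv2 a j k := by
    intro j
    rw [Finset.smul_sum, ← Finset.sum_sub_distrib]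
    refine Finset.sum_congr rfl fun k hk => ?_
    obtain ⟨hkj, hjm, hkm⟩ := (Finset.mem_filter.mp hk).2
    rw [smul_smul, ← tau2_diff a b z m hd j k hjm hkm hkj, sub_smul]
  rw [Finset.smul_sum, Finset.sum_congr rfl (fun j _ => hstep j),
    Finset.sum_sub_distrib]
  have hswap : ∑ j, ∑ k ∈ Finset.univ.filter (fun k => k ≠ j ∧ j ≠ m ∧ k ≠ m),
      tau2 a b z m k • vv2 a j k
      = -∑ j, ∑ k ∈ Finset.univ.filter (fun k => k ≠ j ∧ j ≠ m ∧ k ≠ m),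
      tau2 a b z m j • vv2 a j k := by
    rw [swap_sum (fun t => t ≠ m) (fun j k => tau2 a b z m k • vv2 a j k),
      ← Finset.sum_neg_distrib]
    refine Finset.sum_congr rfl fun j _ => ?_
    rw [← Finset.sum_neg_distrib]
    exact Finset.sum_congr rfl fun k _ => by rw [vv2_swap a j k, smul_neg]
  have hbase : ∑ j, ∑ k ∈ Finset.univ.filter (fun k => k ≠ j ∧ j ≠ m ∧ k ≠ m),
      tau2 a b z m j • vv2 a j k = ∑ j, tau2 a b z m j • vv2 a m j := by
    refine Finset.sum_congr rfl fun j _ => ?_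
    by_cases hjm : j = m
    · rw [Finset.filter_false_of_mem (fun k _ h => h.2.1 hjm), Finset.sum_empty,
        hjm, vv2_diag, smul_zero]
    · have hfeq : Finset.univ.filter (fun k => k ≠ j ∧ j ≠ m ∧ k ≠ m)
          = Finset.univ.filter (fun k => k ≠ j ∧ k ≠ m) := by
        ext k
        simp only [Finset.mem_filter, Finset.mem_univ, true_and]
        tauto
      rw [hfeq, ← Finset.smul_sum, inner_vv a hA j m hjm]
  rw [hswap, hbase, sub_neg_eq_add, two_smul]

lemma core_eq (a : Fin n → ℂ) (b : Fin n → Fin 2 → ℂ) (m : Fin n) (z : Fin n → ℂ)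
    (hA : (∑ t, a t) ≠ 0)
    (hd : ∀ i j : Fin n, i ≠ j → dd2 b i j ≠ 0) :
    ((∑ t, a t) / 2) • ∑ i, ∑ j ∈ Finset.univ.filter (fun j => j ≠ i ∧ i ≠ m ∧ j ≠ m),
        (2 * ff2 b z i j m * ff2 b (Pi.single m 1) i j m /
          (dd2 b i j * dd2 b j m * dd2 b m i)) • vv2 a i j
      = ∑ j, ∑ k ∈ Finset.univ.filter (fun k => k ≠ j ∧ j ≠ m ∧ k ≠ m),
        (ff2 b z m j k / (dd2 b m j * dd2 b k m)) •
          (a k • F2 n m j + a m • F2 n j k + a j • F2 n k m) := by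
  have hpsi : ∀ j k : Fin n, ff2 b z m j k / (dd2 b m j * dd2 b k m) = Psi2 b z m j k := by
    intro j k
    unfold Psi2
    rw [ff2_cyc b z m j k, mul_comm]
  have hfl : ∀ i j : Fin n, i ≠ m → j ≠ m → ff2 b (Pi.single m 1) i j m = dd2 b i j := by
    intro i j hi hj
    simp [ff2, Pi.single_apply, hi, hj]
  have hth : ∀ i j : Fin n, j ≠ i → i ≠ m → j ≠ m →
      2 * ff2 b z i j m * ff2 b (Pi.single m 1) i j m /
        (dd2 b i j * dd2 b j m * dd2 b m i) = 2 * Psi2 b z m i j := by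
    intro i j hji hi hj
    rw [hfl i j hi hj]
    have hdij := hd i j (Ne.symm hji)
    unfold Psi2
    rw [show dd2 b i j * dd2 b j m * dd2 b m i
        = dd2 b i j * (dd2 b j m * dd2 b m i) from by ring,
      show (2:ℂ) * ff2 b z i j m * dd2 b i j
        = dd2 b i j * (2 * ff2 b z i j m) from by ring,
      mul_div_mul_left _ _ hdij, mul_div_assoc]
  have hLHS : ∑ i, ∑ j ∈ Finset.univ.filter (fun j => j ≠ i ∧ i ≠ m ∧ j ≠ m),
      (2 * ff2 b z i j m * ff2 b (Pi.single m 1) i j m /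
        (dd2 b i j * dd2 b j m * dd2 b m i)) • vv2 a i j
      = (2:ℂ) • ∑ i, ∑ j ∈ Finset.univ.filter (fun j => j ≠ i ∧ i ≠ m ∧ j ≠ m),
        Psi2 b z m i j • vv2 a i j := by
    rw [Finset.smul_sum]
    refine Finset.sum_congr rfl fun i _ => ?_
    rw [Finset.smul_sum]
    refine Finset.sum_congr rfl fun j hj => ?_
    obtain ⟨hji, him, hjm⟩ := (Finset.mem_filter.mp hj).2
    rw [hth i j hji him hjm, ← smul_smul]
  have hT1 : ∑ j, ∑ k ∈ Finset.univ.filter (fun k => k ≠ j ∧ j ≠ m ∧ k ≠ m),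
      (ff2 b z m j k / (dd2 b m j * dd2 b k m) * a k) • vv2 a m j
      = ∑ j, tau2 a b z m j • vv2 a m j := by
    refine Finset.sum_congr rfl fun j _ => ?_
    by_cases hjm : j = m
    · rw [Finset.filter_false_of_mem (fun k _ h => h.2.1 hjm), Finset.sum_empty,
        hjm, vv2_diag, smul_zero]
    · have hfeq : Finset.univ.filter (fun k => k ≠ j ∧ j ≠ m ∧ k ≠ m)
          = Finset.univ.filter (fun k => k ≠ j ∧ k ≠ m) := by
        ext k
        simp only [Finset.mem_filter, Finset.mem_univ, true_and]
        tauto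
      rw [hfeq, ← Finset.sum_smul]
      congr 1
      unfold tau2
      exact Finset.sum_congr rfl fun k _ => by rw [hpsi]
  have hT2 : ∑ j, ∑ k ∈ Finset.univ.filter (fun k => k ≠ j ∧ j ≠ m ∧ k ≠ m),
      (ff2 b z m j k / (dd2 b m j * dd2 b k m) * a m) • vv2 a j k
      = a m • ∑ j, ∑ k ∈ Finset.univ.filter (fun k => k ≠ j ∧ j ≠ m ∧ k ≠ m),
        Psi2 b z m j k • vv2 a j k := by
    rw [Finset.smul_sum]
    refine Finset.sum_congr rfl fun j _ => ?_
    rw [Finset.smul_sum]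
    refine Finset.sum_congr rfl fun k _ => ?_
    rw [hpsi, smul_smul, mul_comm (a m)]
  rw [hLHS, RHS_step a b z m, hT1, hT2, ← key_eq a b z m hA hd]
  match_scalars
  ring

end CoreEq

/-- For every `z` with all `f_{i,j,k}(z) ≠ 0` and every `ℓ`:
`(|a|/2) ∂q/∂z_ℓ(z) = K_ℓ(z) q(z)`; thus `q` is a flat section of the Gauss–Manin
connection at `κ = |a|/2` (the bundle of conformal blocks at level `|a|/2`). -/
theorem stmt_14 (n : ℕ) (hn : 3 ≤ n) (b : Fin n → Fin 2 → ℂ)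
    (hd : ∀ i j : Fin n, i ≠ j → dd2 b i j ≠ 0)
    (a : Fin n → ℂ) (ha : ∀ j, a j ≠ 0) (hA : (∑ j, a j) ≠ 0)
    (m : Fin n) (z : Fin n → ℂ)
    (hz : ∀ i j k : Fin n, i ≠ j → i ≠ k → j ≠ k → ff2 b z i j k ≠ 0)
    (l : Fin n) :
    ((∑ j, a j) / 2) • fderiv ℂ (qmap2 a b m) z (Pi.single l 1) =
      K2 a b z l (qmap2 a b m z) := by
  rw [LHS_red a b m z l, RHS_red a b m z l hd hz,
    smul_comm ((∑ j, a j) / 2) (((∑ j, a j) ^ 2)⁻¹),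
    smul_comm ((∑ j, a j) / 2) ((2:ℂ)⁻¹)]
  congr 1
  congr 1
  by_cases hlm : l = m
  · subst hlm
    exact core_eq a b l z hA hd
  · exact core_ne a b m z l hA hd hlm
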